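/- arXiv:1811.08219 — 10 statements merged into one kernel-verified Lean document; each statement's English description precedes it below -/
import Mathlib

section
/- Let A be a unital algebra and R a Rota–Baxter operator on A of nonzero weight λ. If R(1) is a scalar multiple of 1, then A decomposes as the direct vector-space sum of the subalgebras ker(R) and ker(R + λ·id), and R is the splitting Rota–Baxter operator associated to this decomposition. -/
def IsRotaBaxter (F : Type*) {A : Type*} [Field F] [NonUnitalNonAssocRing A]
    [Module F A] (lam : F) (R : A →ₗ[F] A) : Prop :=
  ∀ x y : A, R x * R y = R (R x * y + x * R y + lam • (x * y))

theorem stmt5 (F A : Type*) [Field F] [Ring A] [Algebra F A]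
    (lam : F) (hlam : lam ≠ 0) (R : A →ₗ[F] A) (hR : IsRotaBaxter F lam R)
    (c : F) (hR1 : R 1 = c • (1 : A)) :
    (∀ x ∈ LinearMap.ker R, ∀ y ∈ LinearMap.ker R, x * y ∈ LinearMap.ker R) ∧
    (∀ x ∈ LinearMap.ker (R + lam • LinearMap.id),
      ∀ y ∈ LinearMap.ker (R + lam • LinearMap.id),
        x * y ∈ LinearMap.ker (R + lam • LinearMap.id)) ∧
    IsCompl (LinearMap.ker R) (LinearMap.ker (R + lam • LinearMap.id)) := by
  -- R² = -λ R
  have hsq : ∀ x : A, R (R x) = -(lam • R x) := by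
    intro x
    have h := hR x 1
    rw [hR1, mul_one, mul_smul_comm, mul_smul_comm, mul_one, mul_one,
      map_add, map_add, map_smul, map_smul] at h
    -- h : c • R x = R (R x) + c • R x + lam • R x
    have h2 : c • R x + (R (R x) + lam • R x) = c • R x + 0 := by
      rw [add_zero]
      calc c • R x + (R (R x) + lam • R x) = R (R x) + c • R x + lam • R x := by abel
        _ = c • R x := h.symm
    exact eq_neg_of_add_eq_zero_left (add_left_cancel h2)
  refine ⟨?_, ?_, ?_⟩
  · intro x hx y hy
    rw [LinearMap.mem_ker] at hx hy ⊢
    have h := hR x y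
    rw [hx, hy, zero_mul, mul_zero, zero_mul, zero_add, zero_add, map_smul] at h
    have : lam • R (x * y) = 0 := h.symm
    exact (smul_eq_zero.mp this).resolve_left hlam
  · intro x hx y hy
    rw [LinearMap.mem_ker, LinearMap.add_apply, LinearMap.smul_apply,
      LinearMap.id_apply] at hx hy ⊢
    have hx' : R x = -(lam • x) := eq_neg_of_add_eq_zero_left hx
    have hy' : R y = -(lam • y) := eq_neg_of_add_eq_zero_left hy
    have h := hR x y
    rw [hx', hy'] at h
    have hlhs : -(lam • x) * -(lam • y) = (lam * lam) • (x * y) := by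
      rw [neg_mul_neg, smul_mul_assoc, mul_smul_comm, smul_smul]
    have hin : -(lam • x) * y + x * -(lam • y) + lam • (x * y) = -(lam • (x * y)) := by
      rw [neg_mul, mul_neg, smul_mul_assoc, mul_smul_comm]
      abel
    rw [hlhs, hin, map_neg, map_smul] at h
    -- h : (lam*lam) • (x*y) = -(lam • R (x*y))
    have : lam • (R (x * y) + lam • (x * y)) = 0 := by
      rw [smul_add, smul_smul, h]
      abel
    exact (smul_eq_zero.mp this).resolve_left hlam
  · constructor
    · rw [Submodule.disjoint_def]
      intro x hx hx2
      rw [LinearMap.mem_ker] at hx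
      rw [LinearMap.mem_ker, LinearMap.add_apply, LinearMap.smul_apply,
        LinearMap.id_apply, hx, zero_add] at hx2
      exact (smul_eq_zero.mp hx2).resolve_left hlam
    · rw [codisjoint_iff, eq_top_iff]
      intro x _
      rw [Submodule.mem_sup]
      refine ⟨x + lam⁻¹ • R x, ?_, -(lam⁻¹ • R x), ?_, by abel⟩
      · rw [LinearMap.mem_ker, map_add, map_smul, hsq, smul_neg, smul_smul,
          inv_mul_cancel₀ hlam, one_smul]
        abel
      · rw [LinearMap.mem_ker, LinearMap.add_apply, LinearMap.smul_apply,
          LinearMap.id_apply, map_neg, map_smul, hsq, smul_neg, smul_smul,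
          inv_mul_cancel₀ hlam, one_smul, smul_neg, smul_smul,
          mul_inv_cancel₀ hlam, one_smul]
        abel
end

section
/- Let A = A₁ ⊕ A₂ be a direct sum of algebras and R a Rota–Baxter operator on A of weight λ. Then the linear map P : A₁ → A₁ defined by P(x₁) = Pr_{A₁}(R(x₁)) (the projection onto A₁ of R applied to x₁ ∈ A₁) is a Rota–Baxter operator on A₁ of weight λ. -/
theorem stmt6 (F A₁ A₂ : Type*) [Field F]
    [NonUnitalNonAssocRing A₁] [Module F A₁]
    [NonUnitalNonAssocRing A₂] [Module F A₂]
    (lam : F) (R : (A₁ × A₂) →ₗ[F] (A₁ × A₂)) (hR : IsRotaBaxter F lam R) :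
    IsRotaBaxter F lam
      (LinearMap.fst F A₁ A₂ ∘ₗ R ∘ₗ LinearMap.inl F A₁ A₂) := by
  intro x y
  have h := congrArg Prod.fst (hR (x, 0) (y, 0))
  simp only [LinearMap.coe_comp, Function.comp_apply, LinearMap.inl_apply,
    LinearMap.fst_apply]
  convert h using 2
  · simp [Prod.mul_def]
  · congr 1
    ext <;> simp [Prod.mul_def]
end

section
/- Let A = Fe₁ ⊕ ⋯ ⊕ Feₙ be a direct sum of n copies of a field F (with componentwise multiplication, eᵢeⱼ = δᵢⱼeᵢ). A linear operator R with R(eᵢ) = Σₖ rᵢₖeₖ is a Rota–Baxter operator of weight 1 on A if and only if: (SF1) for each i, either rᵢᵢ = 0 and rᵢₖ ∈ {0,1} for all k ≠ i, or rᵢᵢ = -1 and rᵢₖ ∈ {0,-1} for all k ≠ i; (SF2) if rᵢₖ = rₖᵢ = 0 for i ≠ k, then rᵢₗrₖₗ = 0 for all l ∉ {i,k}; (SF3) if rᵢₖ ≠ 0 for i ≠ k, then rₖᵢ = 0, and for all l ∉ {i,k}, either rₖₗ = 0 or rᵢₗ = rᵢₖ. -/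
theorem stmt7 (F : Type*) [Field F] (n : ℕ)
    (R : (Fin n → F) →ₗ[F] (Fin n → F))
    (r : Fin n → Fin n → F) (hr : ∀ i k, r i k = R (Pi.single i 1) k) :
    IsRotaBaxter F 1 R ↔
      ((∀ i : Fin n,
          (r i i = 0 ∧ ∀ k ≠ i, r i k = 0 ∨ r i k = 1) ∨
          (r i i = -1 ∧ ∀ k ≠ i, r i k = 0 ∨ r i k = -1)) ∧
       (∀ i k : Fin n, i ≠ k → r i k = 0 → r k i = 0 →
          ∀ l, l ≠ i → l ≠ k → r i l * r k l = 0) ∧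
       (∀ i k : Fin n, i ≠ k → r i k ≠ 0 →
          r k i = 0 ∧ ∀ l, l ≠ i → l ≠ k → r k l = 0 ∨ r i l = r i k)) := by
  -- coordinate formula for R
  have Rc : ∀ (x : Fin n → F) (l : Fin n), R x l = ∑ i, x i * r i l := by
    intro x l
    have hx : x = ∑ i, x i • (Pi.single i (1:F) : Fin n → F) := by
      funext j
      simp [Finset.sum_apply, Pi.single_apply]
    conv_lhs => rw [hx]
    rw [map_sum]
    simp [Finset.sum_apply, hr]
  -- reduction to the basis equation (E)
  have key : IsRotaBaxter F 1 R ↔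
      (∀ i j l, r i l * r j l =
        r i j * r j l + r j i * r i l + (if i = j then r i l else 0)) := by
    constructor
    · intro h i j l
      have hthis := congrFun (h (Pi.single i 1) (Pi.single j 1)) l
      rw [Pi.mul_apply, Rc, Rc, Rc] at hthis
      simp only [Pi.add_apply, Pi.mul_apply, Pi.smul_apply, one_smul, Pi.single_apply,
        ite_mul, mul_ite, one_mul, mul_one, zero_mul, mul_zero, add_mul,
        Finset.sum_add_distrib, Finset.sum_ite_eq, Finset.sum_ite_eq',
        Finset.mem_univ, if_true] at hthis
      rw [← hr, ← hr] at hthis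
      rw [hthis]
      by_cases h' : i = j
      · subst h'; simp
      · rw [if_neg h', if_neg (fun h'' => h' h''.symm)]
    · intro hE x y
      funext l
      rw [Pi.mul_apply, Rc, Rc, Rc]
      simp only [Pi.add_apply, Pi.mul_apply, Pi.smul_apply, one_smul, Rc]
      rw [Finset.sum_mul_sum]
      trans ∑ i, ∑ j, x i * y j *
        (r i j * r j l + r j i * r i l + (if i = j then r i l else 0))
      · apply Finset.sum_congr rfl; intro i _
        apply Finset.sum_congr rfl; intro j _
        rw [← hE i j l]; ring
      · simp only [mul_add, Finset.sum_add_distrib, mul_ite, mul_zero,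
          Finset.sum_ite_eq', Finset.mem_univ, if_true,
          add_mul, Finset.sum_mul, Finset.mul_sum]
        congr 1
        congr 1
        · rw [Finset.sum_comm]
          apply Finset.sum_congr rfl; intro i _
          apply Finset.sum_congr rfl; intro j _
          ring
        · apply Finset.sum_congr rfl; intro i _
          apply Finset.sum_congr rfl; intro j _
          ring
        · simp
  rw [key]
  constructor
  · intro hE
    refine ⟨?_, ?_, ?_⟩
    · intro i
      have hii : r i i = 0 ∨ r i i = -1 := by
        have := hE i i i
        rw [if_pos rfl] at this
        have h2 : r i i * (r i i + 1) = 0 := by linear_combination -this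
        rcases mul_eq_zero.1 h2 with h | h
        · exact Or.inl h
        · exact Or.inr (by linear_combination h)
      rcases hii with h0 | h1
      · refine Or.inl ⟨h0, fun k hk => ?_⟩
        have := hE i i k
        rw [if_pos rfl, h0] at this
        have h2 : r i k * (r i k - 1) = 0 := by linear_combination this
        rcases mul_eq_zero.1 h2 with h | h
        · exact Or.inl h
        · exact Or.inr (by linear_combination h)
      · refine Or.inr ⟨h1, fun k hk => ?_⟩
        have := hE i i k
        rw [if_pos rfl, h1] at this
        have h2 : r i k * (r i k + 1) = 0 := by linear_combination this
        rcases mul_eq_zero.1 h2 with h | h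
        · exact Or.inl h
        · exact Or.inr (by linear_combination h)
    · intro i k hik h1 h2 l hli hlk
      have := hE i k l
      rw [if_neg hik, h1, h2] at this
      linear_combination this
    · intro i k hik hne
      have hki : r k i = 0 := by
        have := hE i k i
        rw [if_neg hik] at this
        have h2 : r i k * r k i = 0 := by linear_combination -this
        rcases mul_eq_zero.1 h2 with h | h
        · exact absurd h hne
        · exact h
      refine ⟨hki, fun l hli hlk => ?_⟩
      have := hE i k l
      rw [if_neg hik, hki] at this
      have h2 : r k l * (r i l - r i k) = 0 := by linear_combination this
      rcases mul_eq_zero.1 h2 with h | h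
      · exact Or.inl h
      · exact Or.inr (by linear_combination h)
  · rintro ⟨sf1, sf2, sf3⟩ i j l
    by_cases hij : i = j
    · subst hij
      rw [if_pos rfl]
      by_cases hli : l = i
      · subst hli
        rcases sf1 l with ⟨h, -⟩ | ⟨h, -⟩ <;> rw [h] <;> ring
      · rcases sf1 i with ⟨h, hk⟩ | ⟨h, hk⟩ <;>
          rcases hk l hli with h' | h' <;> rw [h, h'] <;> ring
    · rw [if_neg hij]
      have hprod : r i j * r j i = 0 := by
        by_cases hrij : r i j = 0
        · rw [hrij]; ring
        · rw [(sf3 i j hij hrij).1]; ring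
      by_cases hli : l = i
      · subst hli; linear_combination -hprod
      · by_cases hlj : l = j
        · subst hlj; linear_combination -hprod
        · by_cases hrij : r i j = 0
          · by_cases hrji : r j i = 0
            · rw [hrij, hrji, sf2 i j hij hrij hrji l hli hlj]; ring
            · rcases (sf3 j i (Ne.symm hij) hrji).2 l hlj hli with h | h
              · rw [hrij, h]; ring
              · rw [hrij, h]; ring
          · obtain ⟨hji, hl⟩ := sf3 i j hij hrij
            rcases hl l hli hlj with h | h
            · rw [hji, h]; ring
            · rw [hji, h]; ring
end

section
/- Let A = Fe₁ ⊕ ⋯ ⊕ Feₙ be a direct sum of copies of a field F with componentwise multiplication, and fix 1 ≤ s ≤ n. The linear operator R defined by R(eᵢ) = Σ_{l=i+1}^{s} e_l for 1 ≤ i < s, R(e_s) = 0, and R(eᵢ) = -Σ_{l=i}^{n} e_l for s+1 ≤ i ≤ n, is a Rota–Baxter operator on A of weight 1. -/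
theorem stmt8 (F : Type*) [Field F] (n : ℕ) (s : Fin n)
    (R : (Fin n → F) →ₗ[F] (Fin n → F))
    (hdef : ∀ i l : Fin n,
      R (Pi.single i 1) l =
        if i < s then (if i < l ∧ l ≤ s then 1 else 0)
        else if i = s then 0
        else if i ≤ l then -1 else 0) :
    IsRotaBaxter F 1 R := by
  set g : Fin n → Fin n → F := fun i l => R (Pi.single i 1) l with hg
  have key : ∀ i j l : Fin n,
      g i l * g j l = g i j * g j l + g j i * g i l + (if i = j then g i l else 0) := by
    intro i j l
    simp only [hg, hdef]
    split_ifs <;> (first | (exfalso; omega) | norm_num)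
  have hR : ∀ (x : Fin n → F) (l : Fin n), R x l = ∑ i, x i * g i l := by
    intro x l
    have hx : x = ∑ i : Fin n, x i • (Pi.single i 1 : Fin n → F) := by
      funext j
      simp [Pi.single_apply, eq_comm]
    conv_lhs => rw [hx, map_sum, Finset.sum_apply]
    refine Finset.sum_congr rfl fun i _ => ?_
    rw [map_smul]
    simp [hg]
  intro x y
  funext l
  simp only [Pi.mul_apply, one_smul, hR, Pi.add_apply]
  have step1 : ∀ i j : Fin n,
      (x i * g i l) * (y j * g j l)
        = x i * y j * (g i j * g j l) + x i * y j * (g j i * g i l)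
          + x i * y j * (if i = j then g i l else 0) := by
    intro i j
    calc (x i * g i l) * (y j * g j l) = x i * y j * (g i l * g j l) := by ring
      _ = _ := by rw [key i j l, mul_add, mul_add]
  have hite : ∀ i : Fin n,
      ∑ j, x i * y j * (if i = j then g i l else 0) = x i * y i * g i l := by
    intro i
    simp [mul_ite, mul_zero, Finset.sum_ite_eq]
  have expand : ∀ k : Fin n,
      ((∑ i, x i * g i k) * y k + x k * ∑ j, y j * g j k + x k * y k) * g k l
        = (∑ i, x i * y k * (g i k * g k l)) + (∑ j, x k * y j * (g j k * g k l))
          + x k * y k * g k l := by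
    intro k
    simp only [add_mul, Finset.mul_sum, Finset.sum_mul]
    congr 1
    congr 1
    · exact Finset.sum_congr rfl fun i _ => by ring
    · exact Finset.sum_congr rfl fun j _ => by ring
  calc (∑ i, x i * g i l) * (∑ j, y j * g j l)
      = ∑ i, ∑ j, (x i * g i l) * (y j * g j l) := Finset.sum_mul_sum _ _ _ _
    _ = (∑ i, ∑ j, x i * y j * (g i j * g j l))
        + (∑ i, ∑ j, x i * y j * (g j i * g i l)) + ∑ i, x i * y i * g i l := by
        simp only [step1, Finset.sum_add_distrib, hite]
    _ = (∑ k, ∑ i, x i * y k * (g i k * g k l))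
        + (∑ k, ∑ j, x k * y j * (g j k * g k l)) + ∑ k, x k * y k * g k l := by
        congr 1
        congr 1
        exact Finset.sum_comm
    _ = ∑ k, ((∑ i, x i * g i k) * y k + x k * ∑ j, y j * g j k + x k * y k) * g k l := by
        simp only [expand, Finset.sum_add_distrib]
end

section
/- If R is a Rota–Baxter operator of weight 1 on A = Fe₁ ⊕ ⋯ ⊕ Feₙ with matrix (rᵢⱼ) given by R(eᵢ) = Σₖ rᵢₖeₖ, then rᵢₖ rₖᵢ = 0 for all i ≠ k. -/
theorem stmt9 (F : Type*) [Field F] (n : ℕ)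
    (R : (Fin n → F) →ₗ[F] (Fin n → F)) (hR : IsRotaBaxter F 1 R)
    (r : Fin n → Fin n → F) (hr : ∀ i k, r i k = R (Pi.single i 1) k) :
    ∀ i k : Fin n, i ≠ k → r i k * r k i = 0 := by
  intro i k hik
  have h := hR (Pi.single i 1) (Pi.single k 1)
  have e1 : R (Pi.single i 1) * (Pi.single k 1) = r i k • (Pi.single k 1 : Fin n → F) := by
    funext j
    rcases eq_or_ne j k with rfl | hj
    · simp [hr]
    · simp [Pi.single_eq_of_ne hj]
  have e2 : (Pi.single i 1 : Fin n → F) * R (Pi.single k 1) = r k i • (Pi.single i 1 : Fin n → F) := by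
    funext j
    rcases eq_or_ne j i with rfl | hj
    · simp [hr, mul_comm]
    · simp [Pi.single_eq_of_ne hj]
  have e3 : (Pi.single i 1 : Fin n → F) * Pi.single k 1 = 0 := by
    funext j
    rcases eq_or_ne j i with rfl | hj
    · simp [Pi.single_eq_of_ne hik]
    · simp [Pi.single_eq_of_ne hj]
  rw [e1, e2, e3] at h
  have h2 := congrFun h i
  simp only [map_add, map_smul, Pi.mul_apply, Pi.add_apply, Pi.smul_apply, smul_zero, add_zero,
    map_zero, smul_eq_mul, ← hr] at h2
  -- h2 : r i i * r k i = r i k * r k i + r k i * r i i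
  linear_combination -h2
end

section
/- If R is a Rota–Baxter operator of weight 1 on A = Fe₁ ⊕ ⋯ ⊕ Feₙ with matrix (rᵢⱼ), then for each i, either rᵢᵢ = 0 and rᵢₖ ∈ {0,1} for all k ≠ i, or rᵢᵢ = -1 and rᵢₖ ∈ {0,-1} for all k ≠ i. -/
theorem stmt10 (F : Type*) [Field F] (n : ℕ)
    (R : (Fin n → F) →ₗ[F] (Fin n → F)) (hR : IsRotaBaxter F 1 R)
    (r : Fin n → Fin n → F) (hr : ∀ i k, r i k = R (Pi.single i 1) k) :
    ∀ i : Fin n,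
      (r i i = 0 ∧ ∀ k ≠ i, r i k = 0 ∨ r i k = 1) ∨
      (r i i = -1 ∧ ∀ k ≠ i, r i k = 0 ∨ r i k = -1) := by
  intro i
  set e : Fin n → F := Pi.single i 1 with he
  have key : ∀ k, r i k * r i k = (2 * r i i + 1) * r i k := by
    intro k
    have h := hR e e
    have harg : R e * e + e * R e + (1:F) • (e * e) = (2 * r i i + 1) • e := by
      funext j
      simp only [Pi.add_apply, Pi.mul_apply, Pi.smul_apply, smul_eq_mul, he]
      by_cases hj : j = i
      · subst hj
        rw [Pi.single_eq_same, ← hr]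
        ring
      · rw [Pi.single_eq_of_ne hj]
        ring
    rw [harg, map_smul] at h
    have h2 := congrFun h k
    simp only [Pi.mul_apply, Pi.smul_apply, smul_eq_mul, ← hr] at h2
    rw [he, ← hr] at h2
    exact h2
  have hii := key i
  have : r i i * (r i i + 1) = 0 := by linear_combination -hii
  rcases mul_eq_zero.mp this with h0 | h1
  · left
    refine ⟨h0, fun k _ => ?_⟩
    have hk := key k
    rw [h0] at hk
    have : r i k * (r i k - 1) = 0 := by linear_combination hk
    rcases mul_eq_zero.mp this with h | h
    · exact Or.inl h
    · exact Or.inr (sub_eq_zero.mp h)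
  · right
    have h1' : r i i = -1 := eq_neg_of_add_eq_zero_left h1
    refine ⟨h1', fun k _ => ?_⟩
    have hk := key k
    rw [h1'] at hk
    have : r i k * (r i k + 1) = 0 := by linear_combination hk
    rcases mul_eq_zero.mp this with h | h
    · exact Or.inl h
    · exact Or.inr (eq_neg_of_add_eq_zero_left h)
end

section
/- The only Rota–Baxter operator of weight 0 on A = Fe₁ ⊕ ⋯ ⊕ Feₙ (a direct sum of copies of a field with componentwise multiplication) is the zero operator. -/
theorem stmt11 (F : Type*) [Field F] (n : ℕ)
    (R : (Fin n → F) →ₗ[F] (Fin n → F)) (hR : IsRotaBaxter F 0 R) :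
    R = 0 := by
  have key : ∀ a : Fin n, R (Pi.single a 1) = 0 := by
    intro a
    set s : Fin n → F := Pi.single a 1 with hs
    have hmul : ∀ x : Fin n → F, x * s = (x a) • s := by
      intro x; funext j
      by_cases hj : j = a <;> simp [hs, Pi.single_apply, hj]
    have hmul' : ∀ x : Fin n → F, s * x = (x a) • s := by
      intro x; rw [mul_comm]; exact hmul x
    have h := hR s s
    rw [hmul (R s), hmul' (R s), zero_smul, add_zero, map_add, map_smul] at h
    have h' : ∀ j, R s j * R s j = R s a * R s j + R s a * R s j :=
      fun j => by simpa using congrFun h j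
    have ha : R s a = 0 := by
      have := h' a
      have h2 : R s a * R s a = 0 := by linear_combination -this
      exact mul_self_eq_zero.mp h2
    funext j
    have := h' j
    rw [ha, zero_mul, add_zero] at this
    simpa using mul_self_eq_zero.mp this
  apply Module.Basis.ext (Pi.basisFun F (Fin n))
  intro i
  simpa [Pi.basisFun_apply] using key i
end

section
/- The number of Rota–Baxter operators of weight 1 on A = F ⊕ F (direct sum of two copies of a field F, of characteristic not 2) is exactly 12. -/
section aux
variable {F : Type*} [Field F]

def rbMk (a b c d : F) : (Fin 2 → F) →ₗ[F] (Fin 2 → F) where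
  toFun x := ![a * x 0 + b * x 1, c * x 0 + d * x 1]
  map_add' x y := by funext i; fin_cases i <;> simp <;> ring
  map_smul' m x := by funext i; fin_cases i <;> simp <;> ring

lemma rbMk_apply (a b c d : F) (x : Fin 2 → F) :
    rbMk a b c d x = ![a * x 0 + b * x 1, c * x 0 + d * x 1] := rfl

lemma exists_rbMk (R : (Fin 2 → F) →ₗ[F] (Fin 2 → F)) :
    R = rbMk (R ![1,0] 0) (R ![0,1] 0) (R ![1,0] 1) (R ![0,1] 1) := by
  apply LinearMap.ext
  intro x
  have hx : x = x 0 • ![1,0] + x 1 • ![0,1] := by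
    funext i; fin_cases i <;> simp
  conv_lhs => rw [hx]
  rw [map_add, map_smul, map_smul]
  funext i
  fin_cases i <;> simp [rbMk_apply] <;> ring

lemma rbMk_inj : Function.Injective
    (fun p : F × F × F × F => rbMk p.1 p.2.1 p.2.2.1 p.2.2.2) := by
  rintro ⟨a,b,c,d⟩ ⟨a',b',c',d'⟩ h
  simp only at h
  have h1 := congrFun (LinearMap.congr_fun h ![1,0]) 0
  have h2 := congrFun (LinearMap.congr_fun h ![1,0]) 1
  have h3 := congrFun (LinearMap.congr_fun h ![0,1]) 0
  have h4 := congrFun (LinearMap.congr_fun h ![0,1]) 1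
  simp [rbMk_apply] at h1 h2 h3 h4
  simp [h1, h2, h3, h4]

lemma quad_cases (c k : F) (h : c*c = c*k) : c = 0 ∨ c = k := by
  rcases mul_eq_zero.mp (show c*(c-k) = 0 by linear_combination h) with h' | h'
  · exact Or.inl h'
  · exact Or.inr (sub_eq_zero.mp h')

lemma rb_iff (a b c d : F) :
    IsRotaBaxter F 1 (rbMk a b c d) ↔
      (a*a + a = 0 ∧ d*d + d = 0 ∧ b*c = 0 ∧ c*c = c*(2*a+1) ∧ b*b = b*(2*d+1)) := by
  constructor
  · intro h
    have h00 := congrFun (h ![1,0] ![1,0]) 0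
    have h01 := congrFun (h ![1,0] ![1,0]) 1
    have h10 := congrFun (h ![0,1] ![0,1]) 0
    have h11 := congrFun (h ![0,1] ![0,1]) 1
    have hm := congrFun (h ![1,0] ![0,1]) 1
    simp only [rbMk_apply, Pi.mul_apply, Pi.add_apply, Pi.smul_apply, smul_eq_mul,
      Matrix.cons_val_zero, Matrix.cons_val_one, Matrix.head_cons, one_mul, mul_one,
      mul_zero, zero_mul, add_zero, zero_add] at h00 h01 h10 h11 hm
    refine ⟨by linear_combination -h00, by linear_combination -h11,
      by linear_combination -hm, by linear_combination h01, by linear_combination h10⟩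
  · rintro ⟨h1, h2, h3, h4, h5⟩ x y
    funext i
    fin_cases i <;>
      simp only [rbMk_apply, Pi.mul_apply, Pi.add_apply, Pi.smul_apply, smul_eq_mul,
        Fin.zero_eta, Fin.mk_one, Fin.isValue,
        Matrix.cons_val_zero, Matrix.cons_val_one, Matrix.head_cons, one_mul]
    · linear_combination (-(x 0 * y 0)) * h1 - (x 0 * y 1 + x 1 * y 0) * h3 + (x 1 * y 1) * h5
    · linear_combination (-(x 1 * y 1)) * h2 - (x 0 * y 1 + x 1 * y 0) * h3 + (x 0 * y 0) * h4

end aux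

set_option maxHeartbeats 1600000 in
theorem stmt12 (F : Type*) [Field F] (h2 : (2 : F) ≠ 0) :
    {R : (Fin 2 → F) →ₗ[F] (Fin 2 → F) | IsRotaBaxter F 1 R}.ncard = 12 := by
  classical
  set T : Set (F × F × F × F) :=
    {(0,0,0,0),(0,1,0,0),(0,0,1,0),
     (0,0,0,-1),(0,-1,0,-1),(0,0,1,-1),
     (-1,0,0,0),(-1,1,0,0),(-1,0,-1,0),
     (-1,0,0,-1),(-1,-1,0,-1),(-1,0,-1,-1)} with hT
  have hset : {R : (Fin 2 → F) →ₗ[F] (Fin 2 → F) | IsRotaBaxter F 1 R} =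
      (fun p : F × F × F × F => rbMk p.1 p.2.1 p.2.2.1 p.2.2.2) '' T := by
    ext R
    constructor
    · intro hR
      obtain ⟨a, b, c, d, rfl⟩ : ∃ a b c d : F, R = rbMk a b c d :=
        ⟨_, _, _, _, exists_rbMk R⟩
      rw [Set.mem_setOf_eq, rb_iff] at hR
      obtain ⟨h1, hd, h3, h4, h5⟩ := hR
      have ha' : a = 0 ∨ a = -1 := quad_cases a (-1) (by linear_combination h1)
      have hd' : d = 0 ∨ d = -1 := quad_cases d (-1) (by linear_combination hd)
      have hc' : c = 0 ∨ c = 2*a+1 := quad_cases c _ h4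
      have hb' : b = 0 ∨ b = 2*d+1 := quad_cases b _ h5
      have hbc : b = 0 ∨ c = 0 := mul_eq_zero.mp h3
      refine ⟨(a,b,c,d), ?_, rfl⟩
      rw [hT]
      simp only [Set.mem_insert_iff, Set.mem_singleton_iff, Prod.mk.injEq]
      rcases ha' with rfl | rfl <;> rcases hd' with rfl | rfl <;>
        rcases hbc with rfl | rfl <;>
        [rcases hc' with rfl | rfl; rcases hb' with rfl | rfl;
         rcases hc' with rfl | rfl; rcases hb' with rfl | rfl;
         rcases hc' with rfl | rfl; rcases hb' with rfl | rfl;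
         rcases hc' with rfl | rfl; rcases hb' with rfl | rfl] <;>
        norm_num
    · rintro ⟨p, hp, rfl⟩
      rw [Set.mem_setOf_eq, rb_iff]
      rw [hT] at hp
      simp only [Set.mem_insert_iff, Set.mem_singleton_iff] at hp
      rcases hp with rfl|rfl|rfl|rfl|rfl|rfl|rfl|rfl|rfl|rfl|rfl|rfl <;> norm_num
  rw [hset, Set.ncard_image_of_injective _ rbMk_inj]
  have h1n : (1:F) ≠ -1 := by intro h; exact h2 (by linear_combination h)
  have hn1 : (-1:F) ≠ 1 := fun h => h1n h.symm
  rw [hT]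
  rw [Set.ncard_insert_of_notMem (by simp only [Set.mem_insert_iff, Set.mem_singleton_iff, Prod.mk.injEq, not_or]; norm_num [h1n, hn1]) (Set.toFinite _),
      Set.ncard_insert_of_notMem (by simp only [Set.mem_insert_iff, Set.mem_singleton_iff, Prod.mk.injEq, not_or]; norm_num [h1n, hn1]) (Set.toFinite _),
      Set.ncard_insert_of_notMem (by simp only [Set.mem_insert_iff, Set.mem_singleton_iff, Prod.mk.injEq, not_or]; norm_num [h1n, hn1]) (Set.toFinite _),
      Set.ncard_insert_of_notMem (by simp only [Set.mem_insert_iff, Set.mem_singleton_iff, Prod.mk.injEq, not_or]; norm_num [h1n, hn1]) (Set.toFinite _),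
      Set.ncard_insert_of_notMem (by simp only [Set.mem_insert_iff, Set.mem_singleton_iff, Prod.mk.injEq, not_or]; norm_num [h1n, hn1]) (Set.toFinite _),
      Set.ncard_insert_of_notMem (by simp only [Set.mem_insert_iff, Set.mem_singleton_iff, Prod.mk.injEq, not_or]; norm_num [h1n, hn1]) (Set.toFinite _),
      Set.ncard_insert_of_notMem (by simp only [Set.mem_insert_iff, Set.mem_singleton_iff, Prod.mk.injEq, not_or]; norm_num [h1n, hn1]) (Set.toFinite _),
      Set.ncard_insert_of_notMem (by simp only [Set.mem_insert_iff, Set.mem_singleton_iff, Prod.mk.injEq, not_or]; norm_num [h1n, hn1]) (Set.toFinite _),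
      Set.ncard_insert_of_notMem (by simp only [Set.mem_insert_iff, Set.mem_singleton_iff, Prod.mk.injEq, not_or]; norm_num [h1n, hn1]) (Set.toFinite _),
      Set.ncard_insert_of_notMem (by simp only [Set.mem_insert_iff, Set.mem_singleton_iff, Prod.mk.injEq, not_or]; norm_num [h1n, hn1]) (Set.toFinite _),
      Set.ncard_insert_of_notMem (by simp only [Set.mem_insert_iff, Set.mem_singleton_iff, Prod.mk.injEq, not_or]; norm_num [h1n, hn1]) (Set.toFinite _),
      Set.ncard_singleton]
end

section
/- Let A = Fe₁ ⊕ ⋯ ⊕ Feₙ be a direct sum of n copies of a field F and R a Rota–Baxter operator of weight 0 on A. Then the algebra A^R with product x ∘ y = R(x)y + xR(y) is isomorphic to the n-dimensional algebra with zero multiplication. -/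
/-- The algebra `A^R` is isomorphic (via a linear equivalence preserving
products) to `Fⁿ` endowed with the zero multiplication. -/
theorem stmt17 (F : Type*) [Field F] (n : ℕ)
    (R : (Fin n → F) →ₗ[F] (Fin n → F)) (hR : IsRotaBaxter F 0 R) :
    ∃ e : (Fin n → F) ≃ₗ[F] (Fin n → F),
      ∀ x y : Fin n → F, e (R x * y + x * R y) = 0 := by
  have hsingle : ∀ i, R (Pi.single i (1:F)) = 0 := by
    intro i
    set x : Fin n → F := Pi.single i 1 with hx
    have hmul : ∀ v : Fin n → F, x * v = (v i) • x := by
      intro v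
      funext k
      simp only [Pi.mul_apply, Pi.smul_apply, smul_eq_mul, hx, Pi.single_apply]
      by_cases h : k = i
      · subst h; ring
      · simp [h]
    have h := hR x x
    rw [zero_smul, add_zero, mul_comm (R x) x, hmul (R x)] at h
    rw [← two_smul F ((R x i) • x), smul_smul, map_smul] at h
    -- h : R x * R x = (2 * R x i) • R x
    have hi := congrFun h i
    simp only [Pi.mul_apply, Pi.smul_apply, smul_eq_mul] at hi
    -- hi : R x i * R x i = 2 * R x i * R x i
    have hri : R x i = 0 := by
      have : R x i * R x i = 0 := by linear_combination -hi
      exact mul_self_eq_zero.mp this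
    funext k
    have hk := congrFun h k
    simp only [Pi.mul_apply, Pi.smul_apply, smul_eq_mul, hri, mul_zero, zero_mul] at hk
    exact mul_self_eq_zero.mp hk
  have hR0 : ∀ v : Fin n → F, R v = 0 := by
    intro v
    have hv : v = ∑ i, v i • (Pi.single i (1:F) : Fin n → F) := by
      funext k
      simp [Pi.single_apply, Finset.sum_apply]
    rw [hv, map_sum]
    simp [hsingle]
  refine ⟨LinearEquiv.refl F _, fun x y => ?_⟩
  simp [hR0]
end

section
/- Let A = F ⊕ F with componentwise multiplication and R any Rota–Baxter operator of nonzero weight λ on A. Then the algebra A^R with product x ∘ y = R(x)y + xR(y) + λxy is isomorphic to A itself. -/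
def myEquiv2 {F : Type*} [Field F] (p q r s : F) (hdet : p * s - q * r ≠ 0) :
    (Fin 2 → F) ≃ₗ[F] (Fin 2 → F) where
  toFun x := ![p * x 0 + q * x 1, r * x 0 + s * x 1]
  invFun y := ![(s * y 0 - q * y 1) / (p * s - q * r),
                (p * y 1 - r * y 0) / (p * s - q * r)]
  map_add' x y := by funext i; fin_cases i <;> simp <;> ring
  map_smul' t x := by funext i; fin_cases i <;> simp <;> ring
  left_inv x := by funext i; fin_cases i <;> (simp; rw [div_eq_iff hdet]; ring)
  right_inv y := by funext i; fin_cases i <;> (simp; rw [← mul_div_assoc, ← mul_div_assoc, ← add_div, div_eq_iff hdet]; ring)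

theorem stmt18 (F : Type*) [Field F] (h2 : (2 : F) ≠ 0)
    (lam : F) (hlam : lam ≠ 0)
    (R : (Fin 2 → F) →ₗ[F] (Fin 2 → F)) (hR : IsRotaBaxter F lam R) :
    ∃ e : (Fin 2 → F) ≃ₗ[F] (Fin 2 → F),
      ∀ x y : Fin 2 → F,
        e (R x * y + x * R y + lam • (x * y)) = e x * e y := by
  set a := R ![(1:F), 0] 0 with ha
  set c := R ![(1:F), 0] 1 with hc
  set b := R ![(0:F), 1] 0 with hb
  set d := R ![(0:F), 1] 1 with hd
  have hRform : ∀ x : Fin 2 → F, R x = ![a * x 0 + b * x 1, c * x 0 + d * x 1] := by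
    intro x
    have hx : x = x 0 • ![(1:F), 0] + x 1 • ![(0:F), 1] := by
      funext i; fin_cases i <;> simp
    conv_lhs => rw [hx]
    rw [map_add, map_smul, map_smul]
    funext i; fin_cases i <;>
      simp [Pi.add_apply, Pi.smul_apply, smul_eq_mul, ← ha, ← hb, ← hc, ← hd] <;> ring
  have k11a := congrFun (hR ![(1:F), 0] ![(1:F), 0]) 0
  have k11c := congrFun (hR ![(1:F), 0] ![(1:F), 0]) 1
  have k22b := congrFun (hR ![(0:F), 1] ![(0:F), 1]) 0
  have k22d := congrFun (hR ![(0:F), 1] ![(0:F), 1]) 1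
  have k12 := congrFun (hR ![(1:F), 0] ![(0:F), 1]) 0
  simp only [hRform, Pi.mul_apply, Pi.add_apply, Pi.smul_apply, smul_eq_mul,
    Matrix.cons_val_zero, Matrix.cons_val_one, Matrix.head_cons, mul_zero, mul_one,
    zero_mul, one_mul, add_zero, zero_add] at k11a k11c k22b k22d k12
  have hBC : b * c = 0 := by linear_combination -k12
  have hA : a * a + lam * a = 0 := by linear_combination -k11a
  have hD : d * d + lam * d = 0 := by linear_combination -k22d
  have hnu : (2 * a + lam) ≠ 0 := by
    intro h
    apply hlam
    have : lam * lam = 0 := by linear_combination (2 * a + lam) * h - 4 * hA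
    exact mul_self_eq_zero.mp this
  have hmu : (2 * d + lam) ≠ 0 := by
    intro h
    apply hlam
    have : lam * lam = 0 := by linear_combination (2 * d + lam) * h - 4 * hD
    exact mul_self_eq_zero.mp this
  rcases mul_eq_zero.mp hBC with hb0 | hc0
  · -- b = 0 : lower triangular equiv
    have hdet : (2 * a + lam) * (2 * d + lam) - 0 * c ≠ 0 := by
      simpa using mul_ne_zero hnu hmu
    refine ⟨myEquiv2 (2 * a + lam) 0 c (2 * d + lam) hdet, fun x y => ?_⟩
    funext i
    fin_cases i <;>
      simp only [myEquiv2, hRform, hb0, LinearEquiv.coe_mk, LinearMap.coe_mk, AddHom.coe_mk,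
        Pi.mul_apply, Pi.add_apply, Pi.smul_apply, smul_eq_mul,
        Fin.zero_eta, Fin.mk_one, Matrix.cons_val_zero, Matrix.cons_val_one, Matrix.head_cons]
    · ring
    · linear_combination (-(x 0 * y 0)) * k11c
  · -- c = 0 : upper triangular equiv
    have hdet : (2 * a + lam) * (2 * d + lam) - b * 0 ≠ 0 := by
      simpa using mul_ne_zero hnu hmu
    refine ⟨myEquiv2 (2 * a + lam) b 0 (2 * d + lam) hdet, fun x y => ?_⟩
    funext i
    fin_cases i <;>
      simp only [myEquiv2, hRform, hc0, LinearEquiv.coe_mk, LinearMap.coe_mk, AddHom.coe_mk,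
        Pi.mul_apply, Pi.add_apply, Pi.smul_apply, smul_eq_mul,
        Fin.zero_eta, Fin.mk_one, Matrix.cons_val_zero, Matrix.cons_val_one, Matrix.head_cons]
    · linear_combination (-(x 1 * y 1)) * k22b
    · ring
end
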